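/- Let X be a regular projective curve over a field k and D an ℝ-divisor on X with deg(D) ≥ 0. Then lim_{n→∞} dim_k H^0(nD)/n = deg(D). -/

import Mathlib

open scoped BigOperators Classical

/-- An abstract package of the data attached to a regular projective curve `X` over a field
`k`: `F = Rat(X)` is the function field, `P = X^{(1)}` is the set of closed points,
`degp x = [k(x):k]`, `ord x f` is the order of vanishing of a nonzero rational function `f`
at `x`, `H0 D` is the Riemann–Roch space of an ℝ-divisor `D : P → ℝ` (a `k`-subspace of
`F`), and `riemannRoch` is the Riemann–Roch estimate for integral divisors of large
degree. -/
structure CurveData (k F P : Type*) [Field k] [Field F] [Algebra k F] : Type _ where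
  genus : ℕ
  degp : P → ℕ
  degp_pos : ∀ x, 0 < degp x
  ord : P → F → ℤ
  ord_mul : ∀ (x : P) {f g : F}, f ≠ 0 → g ≠ 0 → ord x (f * g) = ord x f + ord x g
  ord_support_finite : ∀ {f : F}, f ≠ 0 → (Function.support fun x => ord x f).Finite
  ord_deg_zero : ∀ {f : F}, f ≠ 0 → (∑ᶠ x, (ord x f : ℝ) * (degp x : ℝ)) = 0
  finitely_generated : ∃ S : Finset F, IntermediateField.adjoin k (S : Set F) = ⊤
  H0 : (P → ℝ) → Submodule k F
  mem_H0 : ∀ (D : P → ℝ) (f : F), f ∈ H0 D ↔ (f ≠ 0 → ∀ x, 0 ≤ (ord x f : ℝ) + D x)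
  H0_finite : ∀ D, Module.Finite k (H0 D)
  riemannRoch : ∀ D : P → ℝ, (Function.support D).Finite →
    (∀ x, ∃ n : ℤ, (n : ℝ) = D x) →
    2 * (genus : ℝ) - 2 < ∑ᶠ x, D x * (degp x : ℝ) →
    (Module.finrank k ↥(H0 D) : ℝ) = (∑ᶠ x, D x * (degp x : ℝ)) + 1 - genus

variable {k F P : Type*} [Field k] [Field F] [Algebra k F]

/-- The degree of an ℝ-divisor `D`: `deg D = Σ_x D(x)·[k(x):k]`. -/
noncomputable def CurveData.degD (C : CurveData k F P) (D : P → ℝ) : ℝ :=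
  ∑ᶠ x, D x * (C.degp x : ℝ)

/-- `E` is a principal ℝ-divisor, i.e. lies in the ℝ-linear span of the divisors of nonzero
rational functions (the image of `Rat(X)^×_ℝ → nDiv_ℝ(X)`). -/
def CurveData.IsPrincipalR (C : CurveData k F P) (E : P → ℝ) : Prop :=
  E ∈ Submodule.span ℝ {E' : P → ℝ | ∃ f : F, f ≠ 0 ∧ E' = fun x => (C.ord x f : ℝ)}


lemma CurveData.H0_mono (C : CurveData k F P) {D1 D2 : P → ℝ} (h : ∀ x, D1 x ≤ D2 x) :
    C.H0 D1 ≤ C.H0 D2 := by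
  intro f hf
  rw [C.mem_H0] at hf ⊢
  intro hf0 x
  have := hf hf0 x
  linarith [h x]

lemma CurveData.H0_floor (C : CurveData k F P) (E : P → ℝ) :
    C.H0 E = C.H0 (fun x => (⌊E x⌋ : ℝ)) := by
  ext f
  simp only [C.mem_H0]
  constructor <;> intro h hf0 x <;> have hx := h hf0 x
  · have h1 : ((-C.ord x f : ℤ) : ℝ) ≤ E x := by push_cast; linarith
    have h3 : ((-C.ord x f : ℤ) : ℝ) ≤ (⌊E x⌋ : ℝ) := by exact_mod_cast Int.le_floor.mpr h1
    push_cast at h3 ⊢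
    linarith
  · have := Int.floor_le (E x)
    linarith

lemma aux_tendsto_lin_div (A B : ℝ) :
    Filter.Tendsto (fun n : ℕ => ((n : ℝ) * A + B) / n) Filter.atTop (nhds A) := by
  have h1 : Filter.Tendsto (fun n : ℕ => A + B / n) Filter.atTop (nhds (A + 0)) :=
    tendsto_const_nhds.add (tendsto_const_div_atTop_nhds_zero_nat B)
  rw [add_zero] at h1
  apply h1.congr'
  filter_upwards [Filter.eventually_ne_atTop 0] with n hn
  have hn' : (n : ℝ) ≠ 0 := Nat.cast_ne_zero.mpr hn
  field_simp

/-- Let `X` be a regular projective curve over a field `k` and `D` an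
ℝ-divisor on `X` with `deg D ≥ 0`. Then `dim_k H⁰(nD)/n → deg D` as `n → ∞`. -/
theorem tendsto_finrank_H0_div_eq_deg
    (C : CurveData k F P) (D : P → ℝ) (hD : (Function.support D).Finite)
    (hdeg : 0 ≤ C.degD D) :
    Filter.Tendsto
      (fun n : ℕ => (Module.finrank k ↥(C.H0 (fun x => (n : ℝ) * D x)) : ℝ) / (n : ℝ))
      Filter.atTop (nhds (C.degD D)) := by
    classical
  set g : ℝ := (C.genus : ℝ) with hg
  set S : Finset P := hD.toFinset with hSdef
  have hmemS : ∀ x, x ∈ S ↔ D x ≠ 0 := by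
    intro x; rw [hSdef, Set.Finite.mem_toFinset]; rfl
  have hsubD : (Function.support fun x => D x * (C.degp x : ℝ)) ⊆ ↑S := by
    intro x hx
    simp only [Function.mem_support, ne_eq, mul_eq_zero, not_or] at hx
    exact Finset.mem_coe.mpr ((hmemS x).mpr hx.1)
  have hdegDeq : C.degD D = ∑ x ∈ S, D x * (C.degp x : ℝ) :=
    finsum_eq_sum_of_support_subset _ hsubD
  set c : ℝ := ∑ x ∈ S, (C.degp x : ℝ) with hc
  have hc0 : 0 ≤ c := Finset.sum_nonneg fun x _ => by positivity
  set Fl : ℕ → P → ℝ := fun n x => (⌊(n : ℝ) * D x⌋ : ℝ) with hFldef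
  have hFlsupp : ∀ n, Function.support (Fl n) ⊆ Function.support D := by
    intro n x hx
    simp only [Function.mem_support] at hx ⊢
    intro h0
    apply hx
    simp [hFldef, h0]
  have hFlsuppS : ∀ n, (Function.support fun x => Fl n x * (C.degp x : ℝ)) ⊆ ↑S := by
    intro n x hx
    simp only [Function.mem_support, ne_eq, mul_eq_zero, not_or] at hx
    exact Finset.mem_coe.mpr ((hmemS x).mpr (hFlsupp n hx.1))
  have hdegFl : ∀ n, C.degD (Fl n) = ∑ x ∈ S, Fl n x * (C.degp x : ℝ) := fun n =>
    finsum_eq_sum_of_support_subset _ (hFlsuppS n)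
  have hFl_upper : ∀ n : ℕ, C.degD (Fl n) ≤ (n : ℝ) * C.degD D := by
    intro n
    rw [hdegFl, hdegDeq, Finset.mul_sum]
    apply Finset.sum_le_sum
    intro x _
    have h1 : Fl n x ≤ (n : ℝ) * D x := Int.floor_le _
    have h2 : (0 : ℝ) ≤ (C.degp x : ℝ) := by positivity
    nlinarith
  have hFl_lower : ∀ n : ℕ, (n : ℝ) * C.degD D - c ≤ C.degD (Fl n) := by
    intro n
    rw [hdegFl, hdegDeq, Finset.mul_sum, hc, ← Finset.sum_sub_distrib]
    apply Finset.sum_le_sum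
    intro x _
    have h1 : (n : ℝ) * D x - 1 ≤ Fl n x := by
      have := Int.sub_one_lt_floor ((n : ℝ) * D x)
      simp only [hFldef]
      linarith
    have h2 : (0 : ℝ) ≤ (C.degp x : ℝ) := by positivity
    nlinarith
  have hFlint : ∀ n, ∀ x, ∃ m : ℤ, (m : ℝ) = Fl n x := fun n x => ⟨⌊(n : ℝ) * D x⌋, rfl⟩
  have hFlfin : ∀ n, (Function.support (Fl n)).Finite := fun n => hD.subset (hFlsupp n)
  have hH0eq : ∀ n : ℕ, C.H0 (fun x => (n : ℝ) * D x) = C.H0 (Fl n) := fun n =>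
    C.H0_floor _
  rcases eq_or_lt_of_le hdeg with h0 | hpos
  · -- degree zero case
    by_cases hSne : S.Nonempty
    · obtain ⟨x0, hx0⟩ := hSne
      set m : ℕ := 2 * C.genus + ⌈c⌉₊ + 2 with hm
      set E : ℕ → P → ℝ := fun n x => Fl n x + if x = x0 then (m : ℝ) else 0 with hEdef
      have hEsupp : ∀ n, (Function.support fun x => E n x * (C.degp x : ℝ)) ⊆ ↑S := by
        intro n x hx
        simp only [Function.mem_support, ne_eq, mul_eq_zero, not_or] at hx
        by_contra hxS
        apply hx.1
        have hxD : D x = 0 := by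
          by_contra h
          exact hxS (Finset.mem_coe.mpr ((hmemS x).mpr h))
        have hxx0 : x ≠ x0 := by
          intro h; exact hxS (h ▸ Finset.mem_coe.mpr hx0)
        simp [hEdef, hFldef, hxD, hxx0]
      have hEfin : ∀ n, (Function.support (E n)).Finite := by
        intro n
        apply Set.Finite.subset (Set.Finite.union (hFlfin n) (Set.finite_singleton x0))
        intro x hx
        simp only [Function.mem_support, hEdef] at hx
        by_cases hxx : x = x0
        · exact Or.inr hxx
        · left
          simp only [Function.mem_support]
          intro h
          apply hx
          simp [h, hxx]
      have hEint : ∀ n, ∀ x, ∃ z : ℤ, (z : ℝ) = E n x := by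
        intro n x
        by_cases hxx : x = x0
        · exact ⟨⌊(n : ℝ) * D x⌋ + (m : ℤ), by simp [hEdef, hFldef, hxx]⟩
        · exact ⟨⌊(n : ℝ) * D x⌋, by simp [hEdef, hFldef, hxx]⟩
      have hEdeg : ∀ n, C.degD (E n) = C.degD (Fl n) + (m : ℝ) * (C.degp x0 : ℝ) := by
        intro n
        have h1 : C.degD (E n) = ∑ x ∈ S, E n x * (C.degp x : ℝ) :=
          finsum_eq_sum_of_support_subset _ (hEsupp n)
        rw [h1, hdegFl]
        have h2 : ∀ x ∈ S, E n x * (C.degp x : ℝ) =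
            Fl n x * (C.degp x : ℝ) + (if x = x0 then (m : ℝ) * (C.degp x : ℝ) else 0) := by
          intro x _
          by_cases hxx : x = x0 <;> simp [hEdef, hxx, add_mul]
        rw [Finset.sum_congr rfl h2, Finset.sum_add_distrib, Finset.sum_ite_eq' S x0
          (fun x => (m : ℝ) * (C.degp x : ℝ)), if_pos hx0]
      have hdegp0 : (1 : ℝ) ≤ (C.degp x0 : ℝ) := by
        exact_mod_cast C.degp_pos x0
      have hmc : c ≤ (m : ℝ) - 2 * g - 2 := by
        have h1 : c ≤ (⌈c⌉₊ : ℕ) := Nat.le_ceil c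
        have h2 : (m : ℝ) = 2 * (C.genus : ℝ) + (⌈c⌉₊ : ℝ) + 2 := by
          rw [hm]; push_cast; ring
        rw [hg]
        push_cast at h1 ⊢
        linarith
      have hB : ∀ n : ℕ, (Module.finrank k ↥(C.H0 (fun x => (n : ℝ) * D x)) : ℝ) ≤
          (m : ℝ) * (C.degp x0 : ℝ) + 1 := by
        intro n
        have hle : C.H0 (Fl n) ≤ C.H0 (E n) := by
          apply C.H0_mono
          intro x
          by_cases hxx : x = x0
          · subst hxx
            simp only [hEdef]
            simp only [if_true]
            have : (0 : ℝ) ≤ (m : ℝ) := by positivity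
            linarith
          · simp [hEdef, hxx]
        haveI := C.H0_finite (E n)
        have hmono : Module.finrank k ↥(C.H0 (Fl n)) ≤ Module.finrank k ↥(C.H0 (E n)) :=
          Submodule.finrank_mono hle
        have hElb : 2 * g - 2 < C.degD (E n) := by
          rw [hEdeg]
          have h1 := hFl_lower n
          rw [← h0] at h1
          have h3 : (m : ℝ) ≤ (m : ℝ) * (C.degp x0 : ℝ) := by nlinarith [Nat.cast_nonneg (α := ℝ) m]
          have h4 : 2 * g + 2 + c ≤ (m : ℝ) := by linarith
          linarith
        have hrr := C.riemannRoch (E n) (hEfin n) (hEint n) (by exact hElb)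
        have hrr' : (Module.finrank k ↥(C.H0 (E n)) : ℝ) = C.degD (E n) + 1 - g := hrr
        rw [hH0eq n]
        calc (Module.finrank k ↥(C.H0 (Fl n)) : ℝ) ≤ (Module.finrank k ↥(C.H0 (E n)) : ℝ) := by
              exact_mod_cast hmono
          _ = C.degD (E n) + 1 - g := hrr'
          _ ≤ (m : ℝ) * (C.degp x0 : ℝ) + 1 := by
              rw [hEdeg]
              have h1 := hFl_upper n
              rw [← h0] at h1
              have hg0 : 0 ≤ g := by rw [hg]; positivity
              simp only [mul_zero] at h1
              linarith
      rw [← h0]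
      apply tendsto_of_tendsto_of_tendsto_of_le_of_le'
        (tendsto_const_nhds (x := (0 : ℝ)))
        (tendsto_const_div_atTop_nhds_zero_nat ((m : ℝ) * (C.degp x0 : ℝ) + 1))
      · filter_upwards with n
        positivity
      · filter_upwards [Filter.eventually_ge_atTop 1] with n hn
        have hn0 : (0 : ℝ) < n := by exact_mod_cast hn
        gcongr
        exact hB n
    · -- empty support
      have hD0 : ∀ x, D x = 0 := by
        intro x
        by_contra h
        exact hSne ⟨x, (hmemS x).mpr h⟩
      have hconst : ∀ n : ℕ, C.H0 (fun x => (n : ℝ) * D x) = C.H0 (fun _ => (0 : ℝ)) := by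
        intro n
        congr 1
        funext x
        rw [hD0 x, mul_zero]
      rw [← h0]
      refine (tendsto_const_div_atTop_nhds_zero_nat
        (Module.finrank k ↥(C.H0 (fun _ => (0 : ℝ))) : ℝ)).congr fun n => ?_
      rw [hconst n]
  · -- positive degree case
    have ht : Filter.Tendsto (fun n : ℕ => (n : ℝ) * C.degD D - c) Filter.atTop Filter.atTop := by
      have h1 : Filter.Tendsto (fun n : ℕ => (n : ℝ)) Filter.atTop Filter.atTop :=
        tendsto_natCast_atTop_atTop
      have h2 := Filter.Tendsto.atTop_mul_const hpos h1
      simpa [sub_eq_add_neg] using Filter.tendsto_atTop_add_const_right Filter.atTop (-c) h2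
    have hev : ∀ᶠ n : ℕ in Filter.atTop, 2 * g - 2 < C.degD (Fl n) := by
      filter_upwards [ht.eventually_gt_atTop (2 * g - 2)] with n hn
      linarith [hFl_lower n]
    have hlow := aux_tendsto_lin_div (C.degD D) (-c + 1 - g)
    have hup := aux_tendsto_lin_div (C.degD D) (1 - g)
    apply tendsto_of_tendsto_of_tendsto_of_le_of_le' hlow hup
    · filter_upwards [hev, Filter.eventually_ge_atTop 1] with n hn hn1
      have hn0 : (0 : ℝ) < n := by exact_mod_cast hn1
      have hrr := C.riemannRoch (Fl n) (hFlfin n) (hFlint n) (by exact hn)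
      have hrr' : (Module.finrank k ↥(C.H0 (Fl n)) : ℝ) = C.degD (Fl n) + 1 - g := hrr
      rw [hH0eq n, hrr']
      gcongr
      linarith [hFl_lower n]
    · filter_upwards [hev, Filter.eventually_ge_atTop 1] with n hn hn1
      have hn0 : (0 : ℝ) < n := by exact_mod_cast hn1
      have hrr := C.riemannRoch (Fl n) (hFlfin n) (hFlint n) (by exact hn)
      have hrr' : (Module.finrank k ↥(C.H0 (Fl n)) : ℝ) = C.degD (Fl n) + 1 - g := hrr
      rw [hH0eq n, hrr']
      gcongr
      linarith [hFl_upper n]
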